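/- Every 6-regular graph with at least 14 vertices has an internal partition: a partition of its vertex set into two nonempty parts A, B such that every vertex of A has at least 3 neighbors in A and every vertex of B has at least 3 neighbors in B. -/

import Mathlib

open Finset

open scoped Classical in
noncomputable def degIn {V : Type*} (G : SimpleGraph V) [DecidableRel G.Adj] (S : Finset V) (x : V) : ℕ :=
  (S.filter fun y => G.Adj x y).card

set_option linter.unusedSectionVars false

namespace IPaux

variable {V : Type*} [Fintype V] [DecidableEq V] (G : SimpleGraph V) [DecidableRel G.Adj]

def din (S : Finset V) (x : V) : ℕ := (S.filter fun y => G.Adj x y).card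

def cutv (S : Finset V) : ℕ := ∑ y ∈ Sᶜ, din G S y

abbrev Goal : Prop := ∃ A : Finset V, A.Nonempty ∧ Aᶜ.Nonempty ∧
      (∀ x ∈ A, 3 ≤ degIn G A x) ∧ (∀ y ∈ Aᶜ, 3 ≤ degIn G Aᶜ y)

def fam (t : ℕ) : Finset (Finset V) :=
  Finset.univ.powerset.filter fun S => t ≤ S.card ∧ S.card ≤ Fintype.card V - t

lemma mem_fam {t : ℕ} {S : Finset V} :
    S ∈ fam (V := V) t ↔ t ≤ S.card ∧ S.card ≤ Fintype.card V - t := by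
  simp [fam]

lemma din_eq_degIn (S : Finset V) (x : V) : degIn G S x = din G S x := by
  unfold degIn din
  congr 1

variable {G}

lemma din_mono {S T : Finset V} (h : S ⊆ T) (x : V) : din G S x ≤ din G T x :=
  Finset.card_le_card (Finset.filter_subset_filter _ h)

lemma din_insert {S : Finset V} {y : V} (hy : y ∉ S) (z : V) :
    din G (insert y S) z = din G S z + if G.Adj z y then 1 else 0 := by
  unfold din
  rw [Finset.filter_insert]
  split
  · rw [Finset.card_insert_of_notMem (fun hmem => hy (Finset.mem_of_mem_filter _ hmem))]
  · simp

lemma din_insert_self {S : Finset V} {y : V} (hy : y ∉ S) :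
    din G (insert y S) y = din G S y := by
  rw [din_insert hy, if_neg (G.irrefl), add_zero]

lemma din_erase {S : Finset V} {x : V} (hx : x ∈ S) (z : V) :
    din G (S.erase x) z + (if G.Adj z x then 1 else 0) = din G S z := by
  have h := din_insert (G := G) (Finset.notMem_erase x S) z
  rw [Finset.insert_erase hx] at h
  omega

lemma din_le_card_erase {S : Finset V} {u : V} : din G S u ≤ (S.erase u).card := by
  apply Finset.card_le_card
  intro w hw
  rw [Finset.mem_filter] at hw
  exact Finset.mem_erase.2 ⟨fun h => (G.irrefl (h ▸ hw.2)), hw.1⟩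

lemma deg_split (hreg : G.IsRegularOfDegree 6) (S : Finset V) (v : V) :
    din G S v + din G Sᶜ v = 6 := by
  unfold din
  rw [← Finset.card_union_of_disjoint
        (Finset.disjoint_filter_filter disjoint_compl_right)]
  rw [← Finset.filter_union, Finset.union_compl]
  have := hreg v
  rw [← this, ← SimpleGraph.card_neighborFinset_eq_degree]
  congr 1
  ext w
  simp [SimpleGraph.mem_neighborFinset]

lemma cut_compl (S : Finset V) : cutv G Sᶜ = cutv G S := by
  unfold cutv din
  rw [compl_compl]
  simp only [Finset.card_filter]
  rw [Finset.sum_comm]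
  refine Finset.sum_congr rfl fun a ha => Finset.sum_congr rfl fun b hb => ?_
  simp [G.adj_comm]

lemma cut_insert {S : Finset V} {y : V} (hy : y ∉ S) :
    cutv G (insert y S) + din G S y = cutv G S + din G Sᶜ y := by
  have hyc : y ∈ Sᶜ := Finset.mem_compl.2 hy
  unfold cutv
  rw [Finset.compl_insert]
  have h1 : ∑ z ∈ Sᶜ.erase y, din G (insert y S) z
      = ∑ z ∈ Sᶜ.erase y, (din G S z + if G.Adj z y then 1 else 0) :=
    Finset.sum_congr rfl fun z _ => din_insert hy z
  rw [h1, Finset.sum_add_distrib]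
  have h2 : ∑ z ∈ Sᶜ.erase y, (if G.Adj z y then 1 else 0) = din G (Sᶜ.erase y) y := by
    unfold din
    rw [Finset.card_filter]
    refine Finset.sum_congr rfl fun z _ => ?_
    simp [G.adj_comm]
  have h3 : din G (Sᶜ.erase y) y = din G Sᶜ y := by
    unfold din
    rw [Finset.filter_erase, Finset.erase_eq_of_notMem]
    intro hmem
    exact G.irrefl (Finset.mem_filter.1 hmem).2
  have h4 : ∑ z ∈ Sᶜ.erase y, din G S z + din G S y = ∑ z ∈ Sᶜ, din G S z :=
    Finset.sum_erase_add _ _ hyc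
  rw [h2, h3]
  omega

lemma cut_erase {S : Finset V} {x : V} (hx : x ∈ S) :
    cutv G (S.erase x) + din G Sᶜ x = cutv G S + din G S x := by
  have h := cut_insert (G := G) (Finset.notMem_erase x S)
  rw [Finset.insert_erase hx, Finset.compl_erase] at h
  have h3 : din G (S.erase x) x = din G S x := by
    unfold din
    rw [Finset.filter_erase, Finset.erase_eq_of_notMem]
    intro hmem
    exact G.irrefl (Finset.mem_filter.1 hmem).2
  have h4 : din G (insert x Sᶜ) x = din G Sᶜ x :=
    din_insert_self (Finset.notMem_compl.2 hx)
  omega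

lemma even_handshake (S : Finset V) : Even (∑ v ∈ S, din G S v) := by
  induction S using Finset.induction_on with
  | empty => simp
  | @insert a S ha ih =>
      rw [Finset.sum_insert ha]
      have h1 : ∑ v ∈ S, din G (insert a S) v
          = ∑ v ∈ S, (din G S v + if G.Adj v a then 1 else 0) :=
        Finset.sum_congr rfl fun v _ => din_insert ha v
      have h2 : ∑ v ∈ S, (if G.Adj v a then 1 else 0) = din G S a := by
        unfold din
        rw [Finset.card_filter]
        refine Finset.sum_congr rfl fun z _ => ?_
        simp [G.adj_comm]
      have h3 : din G (insert a S) a = din G S a := by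
        rw [din_insert ha, if_neg (G.irrefl), add_zero]
      rw [h3, h1, Finset.sum_add_distrib, h2]
      obtain ⟨m, hm⟩ := ih
      exact ⟨din G S a + m, by omega⟩

lemma goal_of (A : Finset V) (h1 : A.Nonempty) (h2 : Aᶜ.Nonempty)
    (h3 : ∀ x ∈ A, 3 ≤ din G A x) (h4 : ∀ y ∈ Aᶜ, 3 ≤ din G Aᶜ y) : Goal G :=
  ⟨A, h1, h2, fun x hx => by rw [din_eq_degIn]; exact h3 x hx,
    fun y hy => by rw [din_eq_degIn]; exact h4 y hy⟩

lemma absorb (hreg : G.IsRegularOfDegree 6) :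
    ∀ (k : ℕ) (S : Finset V), Sᶜ.card = k → 4 ≤ Sᶜ.card → S.Nonempty →
    (∀ v ∈ S, 3 ≤ din G S v) →
    cutv G S + 2 * S.card ≤ 2 * Fintype.card V + 4 → Goal G := by
  intro k
  induction k using Nat.strong_induction_on with
  | _ k ih =>
    intro S hk h4 hne hstrong hinv
    by_cases hall : ∀ v ∈ Sᶜ, din G S v ≤ 3
    · refine goal_of S hne (Finset.card_pos.1 (by omega)) hstrong ?_
      intro y hy
      have := deg_split hreg S y
      have := hall y hy
      omega
    · push_neg at hall
      obtain ⟨v, hv, hv4⟩ := hall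
      have hvS : v ∉ S := Finset.mem_compl.1 hv
      have hsplit := deg_split hreg S v
      have hbound : ∀ u ∈ Sᶜ, din G Sᶜ u ≤ Sᶜ.card - 1 := by
        intro u hu
        have := din_le_card_erase (G := G) (S := Sᶜ) (u := u)
        rw [Finset.card_erase_of_mem hu] at this
        exact this
      rcases Nat.lt_or_ge 4 Sᶜ.card with hgt | heq
      · set S' := insert v S with hS'
        have hvc : (insert v S)ᶜ = Sᶜ.erase v := Finset.compl_insert
        have hcard' : S'ᶜ.card = k - 1 := by
          rw [hS', hvc, Finset.card_erase_of_mem hv, hk]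
        have hklt : k - 1 < k := by omega
        refine ih (k-1) hklt S' hcard' ?_ ?_ ?_ ?_
        · rw [hcard']; omega
        · exact ⟨v, Finset.mem_insert_self v S⟩
        · intro u hu
          rcases Finset.mem_insert.1 hu with rfl | huS
          · rw [din_insert_self hvS]; omega
          · exact (hstrong u huS).trans (din_mono (Finset.subset_insert v S) u)
        · have hci := cut_insert (G := G) hvS
          rw [← hS'] at hci
          have hcard2 : S'.card = S.card + 1 := by
            rw [hS']; exact Finset.card_insert_of_notMem hvS
          omega
      · exfalso
        have hcS : S.card = Fintype.card V - 4 := by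
          have := Finset.card_compl S
          omega
        have hcut13 : 13 ≤ cutv G S := by
          have hlb : ∀ u ∈ Sᶜ, 3 ≤ din G S u := by
            intro u hu
            have h1 := hbound u hu
            have h2 := deg_split hreg S u
            omega
          have hsum : ∑ u ∈ Sᶜ, 3 < ∑ u ∈ Sᶜ, din G S u :=
            Finset.sum_lt_sum hlb ⟨v, hv, by omega⟩
          rw [Finset.sum_const, smul_eq_mul] at hsum
          unfold cutv
          omega
        have hVlarge : 4 ≤ Fintype.card V := by
          have := Finset.card_compl S
          have := Finset.card_le_univ Sᶜ
          omega
        omega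

lemma interior_case (hreg : G.IsRegularOfDegree 6) {t : ℕ} {M : Finset V}
    (hMmin : ∀ C ∈ fam (V := V) t, cutv G M ≤ cutv G C)
    (hlo : t + 1 ≤ M.card) (hhi : M.card + t + 1 ≤ Fintype.card V) : Goal G := by
  have hMn : M.card ≤ Fintype.card V := Finset.card_le_univ M
  have hnobadM : ∀ v ∈ M, 3 ≤ din G M v := by
    intro v hv
    by_contra hbad
    have hsp := deg_split hreg M v
    have hce := cut_erase (G := G) hv
    have hmem : M.erase v ∈ fam (V := V) t := by
      rw [mem_fam, Finset.card_erase_of_mem hv]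
      omega
    have := hMmin _ hmem
    omega
  have hnobadC : ∀ v ∈ Mᶜ, 3 ≤ din G Mᶜ v := by
    intro v hv
    by_contra hbad
    have hsp := deg_split hreg M v
    have hci := cut_insert (G := G) (Finset.mem_compl.1 hv)
    have hmem : insert v M ∈ fam (V := V) t := by
      rw [mem_fam, Finset.card_insert_of_notMem (Finset.mem_compl.1 hv)]
      omega
    have := hMmin _ hmem
    omega
  refine goal_of M (Finset.card_pos.1 (by omega)) (Finset.card_pos.1 ?_) hnobadM hnobadC
  rw [Finset.card_compl]
  omega

lemma small_out (hreg : G.IsRegularOfDegree 6) {t : ℕ}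
    (harith : 2 * t + 2 ≤ Fintype.card V ∧ Fintype.card V ≤ 2 * t + 3)
    {A : Finset V} (hA : A.card = t)
    (hmin : ∀ C ∈ fam (V := V) t, cutv G A ≤ cutv G C) :
    Goal G ∨ ∀ y ∈ Aᶜ, din G A y ≤ 2 := by
  obtain ⟨hn1, hn2⟩ := harith
  have hle3 : ∀ y ∈ Aᶜ, din G A y ≤ 3 := by
    intro y hy
    by_contra hbad
    have hsp := deg_split hreg A y
    have hci := cut_insert (G := G) (Finset.mem_compl.1 hy)
    have hmem : insert y A ∈ fam (V := V) t := by
      rw [mem_fam, Finset.card_insert_of_notMem (Finset.mem_compl.1 hy), hA]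
      omega
    have := hmin _ hmem
    omega
  by_cases h2 : ∀ y ∈ Aᶜ, din G A y ≤ 2
  · exact Or.inr h2
  · left
    push_neg at h2
    obtain ⟨y, hy, hy3⟩ := h2
    have hy3' : din G A y = 3 := le_antisymm (hle3 y hy) hy3
    have hsp := deg_split hreg A y
    have hci := cut_insert (G := G) (Finset.mem_compl.1 hy)
    have hcardI : (insert y A).card = t + 1 := by
      rw [Finset.card_insert_of_notMem (Finset.mem_compl.1 hy), hA]
    have hcuteq : cutv G (insert y A) = cutv G A := by omega
    refine interior_case hreg (t := t) (M := insert y A) ?_ (by omega) (by omega)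
    intro C hC
    rw [hcuteq]
    exact hmin C hC

lemma small_case (hreg : G.IsRegularOfDegree 6) (hn : 14 ≤ Fintype.card V) {t : ℕ}
    (htdef : t = (Fintype.card V - 2) / 2)
    {A : Finset V} (hA : A.card = t)
    (hmin : ∀ C ∈ fam (V := V) t, cutv G A ≤ cutv G C) : Goal G := by
  set n := Fintype.card V with hndef
  have harith : 2 * t + 2 ≤ n ∧ n ≤ 2 * t + 3 := by omega
  have ht6 : 6 ≤ t := by omega
  rcases small_out hreg harith hA hmin with g | h2
  · exact g
  have hAcc : Aᶜ.card = n - t := by rw [Finset.card_compl, hA]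
  have hAn : A.card ≤ n := Finset.card_le_univ A
  by_cases hA3 : ∀ v ∈ A, 3 ≤ din G A v
  · refine goal_of A (Finset.card_pos.1 (by omega)) (Finset.card_pos.1 (by omega)) hA3 ?_
    intro y hy
    have := deg_split hreg A y
    have := h2 y hy
    omega
  push_neg at hA3
  obtain ⟨x, hxA, hx2⟩ := hA3
  have hx2' : din G A x ≤ 2 := by omega
  have hsx := deg_split hreg A x
  have hxnc : x ∉ Aᶜ := Finset.notMem_compl.2 hxA
  have hc : cutv G A ≤ 2 * Aᶜ.card := by
    unfold cutv
    calc ∑ y ∈ Aᶜ, din G A y ≤ ∑ _y ∈ Aᶜ, 2 := Finset.sum_le_sum h2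
    _ = 2 * Aᶜ.card := by rw [Finset.sum_const, smul_eq_mul, mul_comm]
  by_cases habs : cutv G A + din G A x ≤ din G Aᶜ x + 2 * t + 2
  · -- absorption succeeds
    have hci := cut_insert (G := G) hxnc
    rw [compl_compl, cut_compl] at hci
    -- hci : cutv G (insert x Aᶜ) + din G Aᶜ x = cutv G A + din G A x
    have hccomp : (insert x Aᶜ)ᶜ = A.erase x := by
      rw [Finset.compl_insert, compl_compl]
    refine absorb hreg ((insert x Aᶜ)ᶜ).card (insert x Aᶜ) rfl ?_
      ⟨x, Finset.mem_insert_self x Aᶜ⟩ ?_ ?_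
    · rw [hccomp, Finset.card_erase_of_mem hxA, hA]
      omega
    · intro u hu
      rcases Finset.mem_insert.1 hu with rfl | huS
      · rw [din_insert_self hxnc]; omega
      · have h6 := deg_split hreg A u
        have := h2 u huS
        have := din_mono (G := G) (Finset.subset_insert x Aᶜ) u
        omega
    · have hcardS : (insert x Aᶜ).card = n - t + 1 := by
        rw [Finset.card_insert_of_notMem hxnc, hAcc]
      rw [hcardS]
      omega
  · -- rigidity case
    push_neg at habs
    have hn23 : n = 2 * t + 3 ∧ din G Aᶜ x = 4 ∧ din G A x = 2 := by omega
    obtain ⟨hnodd, hdx4, hdx2⟩ := hn23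
    -- parity
    have hsum6 : cutv G A + ∑ y ∈ Aᶜ, din G Aᶜ y = 6 * Aᶜ.card := by
      unfold cutv
      rw [← Finset.sum_add_distrib]
      rw [Finset.sum_congr rfl (fun y _ => deg_split hreg A y)]
      rw [Finset.sum_const, smul_eq_mul, mul_comm]
    obtain ⟨m, hm⟩ := even_handshake (G := G) (Aᶜ : Finset V)
    have htot : cutv G A = 2 * Aᶜ.card := by omega
    have hall2 : ∀ y ∈ Aᶜ, din G A y = 2 := by
      intro y hy
      by_contra hne
      have hlt : din G A y < 2 := by
        have := h2 y hy
        omega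
      have : cutv G A < 2 * Aᶜ.card := by
        unfold cutv
        calc ∑ z ∈ Aᶜ, din G A z < ∑ _z ∈ Aᶜ, 2 :=
          Finset.sum_lt_sum h2 ⟨y, hy, hlt⟩
        _ = 2 * Aᶜ.card := by rw [Finset.sum_const, smul_eq_mul, mul_comm]
      omega
    -- the neighborhood T of x in Aᶜ
    set T : Finset V := Aᶜ.filter (fun z => G.Adj x z) with hTdef
    have hTcard : T.card = 4 := hdx4
    have hTsub : T ⊆ Aᶜ := Finset.filter_subset _ _
    have hBT : 5 ≤ (Aᶜ \ T).card := by
      rw [Finset.card_sdiff_of_subset hTsub, hTcard, hAcc]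
      omega
    have key : ∀ y ∈ Aᶜ \ T, Goal G ∨ (Aᶜ.filter fun z => G.Adj y z) = T := by
      intro y hy
      obtain ⟨hyAc, hyT⟩ := Finset.mem_sdiff.1 hy
      have hxy : ¬ G.Adj x y := fun h => hyT (Finset.mem_filter.2 ⟨hyAc, h⟩)
      have hyA : y ∉ A := Finset.mem_compl.1 hyAc
      have hynotin : y ∉ A.erase x := fun h => hyA (Finset.mem_of_mem_erase h)
      set A' := insert y (A.erase x) with hA'def
      have hcardA' : A'.card = t := by
        rw [hA'def, Finset.card_insert_of_notMem hynotin,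
          Finset.card_erase_of_mem hxA, hA]
        omega
      -- cut computations
      have hce := cut_erase (G := G) hxA
      have hci := cut_insert (G := G) hynotin
      rw [← hA'def] at hci
      have hdAy : din G A y = 2 := hall2 y hyAc
      have hdey : din G (A.erase x) y = din G A y := by
        have := din_erase (G := G) hxA y
        rw [if_neg (fun h => hxy (G.adj_symm h))] at this
        omega
      have hcompl_e : (A.erase x)ᶜ = insert x Aᶜ := Finset.compl_erase
      have hdiy : din G (A.erase x)ᶜ y = din G Aᶜ y := by
        rw [hcompl_e, din_insert hxnc, if_neg (fun h => hxy (G.adj_symm h)), add_zero]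
      have hdAcy : din G Aᶜ y = 4 := by
        have := deg_split hreg A y
        omega
      have hcutA' : cutv G A' = cutv G A := by
        rw [hdey, hdAy] at hci
        rw [hdiy, hdAcy] at hci
        omega
      have hmin' : ∀ C ∈ fam (V := V) t, cutv G A' ≤ cutv G C := by
        intro C hC
        rw [hcutA']
        exact hmin C hC
      rcases small_out hreg harith hcardA' hmin' with g | h2'
      · exact Or.inl g
      · right
        refine Finset.eq_of_subset_of_card_le ?_ ?_
        · intro z hz
          obtain ⟨hzAc, hzadj⟩ := Finset.mem_filter.1 hz
          rw [hTdef, Finset.mem_filter]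
          refine ⟨hzAc, ?_⟩
          by_contra hxz
          have hzy : z ≠ y := fun h => G.irrefl (h ▸ hzadj)
          have hzA' : z ∈ A'ᶜ := by
            rw [Finset.mem_compl, hA'def]
            intro hmem
            rcases Finset.mem_insert.1 hmem with rfl | hmem2
            · exact hzy rfl
            · exact (Finset.mem_compl.1 hzAc) (Finset.mem_of_mem_erase hmem2)
          have hdz : din G A' z = 3 := by
            have he := din_erase (G := G) hxA z
            rw [if_neg (fun h => hxz (G.adj_symm h))] at he
            have hi := din_insert (G := G) hynotin z
            rw [← hA'def] at hi
            rw [if_pos (G.adj_symm hzadj)] at hi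
            have := hall2 z hzAc
            omega
          have := h2' z hzA'
          omega
        · rw [hTcard]
          have : (Aᶜ.filter fun z => G.Adj y z).card = din G Aᶜ y := rfl
          rw [this, hdAcy]
    by_cases hforall : ∀ y ∈ Aᶜ \ T, (Aᶜ.filter fun z => G.Adj y z) = T
    · exfalso
      have hTne : T.Nonempty := Finset.card_pos.1 (by omega)
      obtain ⟨t', ht'⟩ := hTne
      have ht'Ac : t' ∈ Aᶜ := hTsub ht'
      have hsubset : Aᶜ \ T ⊆ Aᶜ.filter (fun z => G.Adj t' z) := by
        intro y hy
        have hyAc := (Finset.mem_sdiff.1 hy).1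
        have := hforall y hy
        rw [← this] at ht'
        have hadj : G.Adj y t' := (Finset.mem_filter.1 ht').2
        exact Finset.mem_filter.2 ⟨hyAc, G.adj_symm hadj⟩
      have hcardle := Finset.card_le_card hsubset
      have : (Aᶜ.filter fun z => G.Adj t' z).card = din G Aᶜ t' := rfl
      rw [this] at hcardle
      have h6 := deg_split hreg A t'
      have := hall2 t' ht'Ac
      omega
    · push_neg at hforall
      obtain ⟨y, hy, hne⟩ := hforall
      rcases key y hy with g | e
      · exact g
      · exact absurd e hne

end IPaux

/-- Every 6-regular graph with at least 14 vertices has an internal partition. -/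
theorem six_regular_internal_partition {V : Type*} [Fintype V] [DecidableEq V]
    (G : SimpleGraph V) [DecidableRel G.Adj] (hreg : G.IsRegularOfDegree 6) (hn : 14 ≤ Fintype.card V) :
    ∃ A : Finset V, A.Nonempty ∧ Aᶜ.Nonempty ∧
      (∀ x ∈ A, 3 ≤ degIn G A x) ∧ (∀ y ∈ Aᶜ, 3 ≤ degIn G Aᶜ y) := by
  classical
  set n := Fintype.card V with hndef
  set t := (n - 2) / 2 with htdef
  have htn : t ≤ n := by omega
  obtain ⟨M0, hM0sub, hM0card⟩ :=
    Finset.exists_subset_card_eq (s := (Finset.univ : Finset V)) (n := t) (by rw [Finset.card_univ]; omega)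
  have hM0mem : M0 ∈ IPaux.fam (V := V) t := by
    rw [IPaux.mem_fam, hM0card]
    omega
  obtain ⟨M, hMF, hMmin⟩ :=
    Finset.exists_min_image (IPaux.fam (V := V) t) (IPaux.cutv G) ⟨M0, hM0mem⟩
  have hMrange := (IPaux.mem_fam).1 hMF
  rcases Nat.lt_or_ge M.card (t + 1) with hlow | hhigh
  · -- M.card = t
    have hMt : M.card = t := by omega
    exact IPaux.small_case hreg hn rfl hMt hMmin
  · rcases Nat.lt_or_ge (M.card + t + 1) (n + 1) with hint | hbig
    · -- interior
      exact IPaux.interior_case hreg hMmin hhigh (by omega)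
    · -- M.card = n - t : use complement
      have hMct : Mᶜ.card = t := by
        rw [Finset.card_compl]
        have := Finset.card_le_univ M
        omega
      have hmin' : ∀ C ∈ IPaux.fam (V := V) t, IPaux.cutv G Mᶜ ≤ IPaux.cutv G C := by
        intro C hC
        rw [IPaux.cut_compl]
        exact hMmin C hC
      exact IPaux.small_case hreg hn rfl hMct hmin'
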